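/- Consider the Interaction 9 guiding system F : {(Σ,Ω) : Σ² ≠ 1} → ℝ², F(Σ,Ω) = ((3/2)·Σ·(−γ(Σ²+Ω²−1)+2Σ²+Ω²−2), (3/2)·Ω·(−(γ−2)Σ² + γ + Ω²·(−γ+m+1) + m·Ω⁴/(Σ²−1) − 1)), with parameters γ and m ≠ 0 satisfying (1−γ)/m > 0. Set Ω_N := √((1−γ)/m). Then (0,Ω_N) is an equilibrium point of F, and the Jacobian matrix of F at (0,Ω_N) is the diagonal matrix with diagonal entries 3((γ−1)² + (γ−2)m)/(2m) and −3(γ−1)(γ+m−1)/m. -/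

import Mathlib

/-- Interaction 9 guiding system: when `m ≠ 0` and `(1−γ)/m > 0`, the point
`N₁ = (0, √((1−γ)/m))` is an equilibrium and the Jacobian there is
`diag(3((γ−1)² + (γ−2)m)/(2m), −3(γ−1)(γ+m−1)/m)`. -/
theorem interaction9_N1_equilibrium
    (γ m : ℝ) (hm : m ≠ 0) (hpos : 0 < (1 - γ) / m)
    (ΩN : ℝ) (hΩN : ΩN = Real.sqrt ((1 - γ) / m))
    (F : ℝ × ℝ → ℝ × ℝ)
    (hF : ∀ p : ℝ × ℝ, F p =
      ((3 / 2) * p.1 * (-γ * (p.1 ^ 2 + p.2 ^ 2 - 1) + 2 * p.1 ^ 2 + p.2 ^ 2 - 2),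
       (3 / 2) * p.2 * (-(γ - 2) * p.1 ^ 2 + γ + p.2 ^ 2 * (-γ + m + 1)
         + m * p.2 ^ 4 / (p.1 ^ 2 - 1) - 1))) :
    F (0, ΩN) = (0, 0) ∧
    HasFDerivAt F
      (((3 * ((γ - 1) ^ 2 + (γ - 2) * m) / (2 * m)) •
          ContinuousLinearMap.id ℝ ℝ).prodMap
        ((-3 * (γ - 1) * (γ + m - 1) / m) • ContinuousLinearMap.id ℝ ℝ)) (0, ΩN) := by
  have hΩ2 : ΩN ^ 2 = (1 - γ) / m := by
    rw [hΩN]; exact Real.sq_sqrt hpos.le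
  have hΩ4 : ΩN ^ 4 = ((1 - γ) / m) ^ 2 := by
    rw [← hΩ2]; ring
  constructor
  · rw [hF]
    refine Prod.ext (by simp) ?_
    simp only
    have : (3:ℝ) / 2 * ΩN * (-(γ - 2) * 0 ^ 2 + γ + ΩN ^ 2 * (-γ + m + 1)
        + m * ΩN ^ 4 / ((0:ℝ) ^ 2 - 1) - 1) =
        3 / 2 * ΩN * (γ + ((1-γ)/m) * (-γ + m + 1) - m * ((1-γ)/m)^2 - 1) := by
      rw [hΩ2, hΩ4]; ring
    rw [this]
    field_simp
    ring
  · have hFeq : F = fun p : ℝ × ℝ =>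
        ((3 / 2) * p.1 * ((-γ) * (p.1 * p.1 + p.2 * p.2 - 1) + (2 * (p.1 * p.1) + (p.2 * p.2 - 2))),
         (3 / 2) * p.2 * (((-(γ - 2)) * (p.1 * p.1) + γ + (-γ + m + 1) * (p.2 * p.2)
           + (m * ((p.2 * p.2) * (p.2 * p.2))) * (p.1 * p.1 - 1)⁻¹) - 1)) := by
      funext p
      rw [hF]
      exact Prod.ext (by ring) (by rw [div_eq_mul_inv]; ring_nf)
    rw [hFeq]
    have hx : HasFDerivAt (fun p : ℝ × ℝ => p.1) (ContinuousLinearMap.fst ℝ ℝ ℝ) ((0:ℝ), ΩN) :=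
      hasFDerivAt_fst
    have hy : HasFDerivAt (fun p : ℝ × ℝ => p.2) (ContinuousLinearMap.snd ℝ ℝ ℝ) ((0:ℝ), ΩN) :=
      hasFDerivAt_snd
    have hx2 := hx.mul hx
    have hy2 := hy.mul hy
    have hA := (((hx2.add hy2).sub_const 1).const_mul (-γ)).add
      ((hx2.const_mul 2).add (hy2.sub_const 2))
    have hf := (hx.const_mul ((3:ℝ)/2)).mul hA
    have hy4 := hy2.mul hy2
    have hnum := hy4.const_mul m
    have hden := hx2.sub_const 1
    have hinv := (hasDerivAt_inv (show (0:ℝ) * 0 - 1 ≠ 0 by norm_num)).comp_hasFDerivAt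
      ((0:ℝ), ΩN) hden
    simp only [Function.comp_def] at hinv
    have hfrac := hnum.mul hinv
    have hB := ((((hx2.const_mul (-(γ-2))).add_const γ).add (hy2.const_mul (-γ + m + 1))).add
      hfrac).sub_const 1
    have hg := (hy.const_mul ((3:ℝ)/2)).mul hB
    refine (HasFDerivAt.prodMk hf hg).congr_fderiv ?_
    refine ContinuousLinearMap.ext fun v => ?_
    simp [Prod.ext_iff]
    have hmm : m * m⁻¹ = 1 := mul_inv_cancel₀ hm
    constructor
    · linear_combination ((3:ℝ)/2 * (1 - γ) * v.1) * hΩ2 + ((3:ℝ) - 3/2*γ) * v.1 * hmm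
    · linear_combination ((9:ℝ)/2 * (1 - γ + m) * v.2) * hΩ2 - ((15:ℝ)/2 * m * v.2) * hΩ4 + (-((3:ℝ)/2*γ*v.2 - 15*γ*v.2*m⁻¹ + 15/2*γ^2*v.2*m⁻¹ - 3/2*v.2 + 15/2*v.2*m⁻¹)) * hmm
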